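/- arXiv:1608.08141 — 4 statements merged into one kernel-verified Lean document; each statement's English description precedes it below -/
import Mathlib

section
/- Let p(t) = t^n - c_1 t^{n-1} - ... - c_n with all c_k ≥ 0, let I be the set of indices k with c_k ≠ 0, and let d = gcd of the elements of I (with d = 0 if I is empty). Then p is weakly spectrally Perron if and only if d ≠ 0, i.e., if and only if some coefficient c_k is positive. -/
open Matrix Polynomial Finset

/-- The polynomial `p(t) = t^n - c 1 * t^(n-1) - ⋯ - c n`. -/
noncomputable def polyOf (n : ℕ) (c : ℕ → ℝ) : Polynomial ℝ :=
  X ^ n - ∑ k ∈ Finset.Icc 1 n, Polynomial.C (c k) * X ^ (n - k)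

/-- Companion matrix of `p(t) = t^n - c 1 * t^(n-1) - ⋯ - c n`:
ones on the superdiagonal, last row `(c n, c (n-1), …, c 1)`, zeros elsewhere. -/
def companionOf (n : ℕ) (c : ℕ → ℝ) : Matrix (Fin n) (Fin n) ℝ :=
  fun i j => if (i : ℕ) + 1 = (j : ℕ) then 1
    else if (i : ℕ) = n - 1 then c (n - (j : ℕ)) else 0

/-- The characteristic polynomial of a real matrix, viewed over `ℂ`. -/
noncomputable def specPoly {n : ℕ} (A : Matrix (Fin n) (Fin n) ℝ) : Polynomial ℂ :=
  A.charpoly.map (algebraMap ℝ ℂ)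

/-- `A` is spectrally Perron: it has a simple positive real eigenvalue `ρ`
strictly exceeding the modulus of every other eigenvalue. -/
def SpectrallyPerron {n : ℕ} (A : Matrix (Fin n) (Fin n) ℝ) : Prop :=
  ∃ ρ : ℝ, 0 < ρ ∧ (specPoly A).rootMultiplicity (ρ : ℂ) = 1 ∧
    ∀ z : ℂ, (specPoly A).IsRoot z → z ≠ (ρ : ℂ) → ‖z‖ < ρ

/-- `A` is weakly spectrally Perron: it has a simple positive real eigenvalue `ρ`
with `ρ ≥ |λ|` for every eigenvalue `λ` of `A`. -/
def WeaklySpectrallyPerron {n : ℕ} (A : Matrix (Fin n) (Fin n) ℝ) : Prop :=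
  ∃ ρ : ℝ, 0 < ρ ∧ (specPoly A).rootMultiplicity (ρ : ℂ) = 1 ∧
    ∀ z : ℂ, (specPoly A).IsRoot z → ‖z‖ ≤ ρ

lemma polyOf_succ (m : ℕ) (c : ℕ → ℝ) :
    polyOf (m + 1) c = X * polyOf m c - C (c (m + 1)) := by
  unfold polyOf
  rw [Finset.sum_Icc_succ_top (by omega : 1 ≤ m + 1)]
  rw [mul_sub, Finset.mul_sum, ← pow_succ']
  have : ∀ k ∈ Finset.Icc 1 m, C (c k) * X ^ (m + 1 - k) = X * (C (c k) * X ^ (m - k)) := by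
    intro k hk
    simp only [Finset.mem_Icc] at hk
    rw [show m + 1 - k = (m - k) + 1 by omega, pow_succ]
    ring
  rw [Finset.sum_congr rfl this]
  simp
  ring

lemma charpoly_companionOf : ∀ (n : ℕ) (c : ℕ → ℝ),
    (companionOf n c).charpoly = polyOf n c := by
  intro n
  induction n with
  | zero =>
      intro c
      simp [Matrix.charpoly, Matrix.det_fin_zero, polyOf]
  | succ m ih =>
      intro c
      rcases Nat.eq_zero_or_pos m with hm | hm
      · subst hm
        rw [Matrix.charpoly, Matrix.det_fin_one]
        simp [charmatrix_apply_eq, companionOf, polyOf]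
      · rw [Matrix.charpoly, Matrix.det_succ_column_zero]
        set A := companionOf (m + 1) c with hA
        have hne : (0 : Fin (m+1)) ≠ Fin.last m := by
          intro h
          have := congrArg (Fin.val) h
          simp [Fin.val_last] at this
          omega
        have hsum : ∑ i : Fin (m+1), (-1 : ℝ[X]) ^ (i : ℕ) * charmatrix A i 0 *
            ((charmatrix A).submatrix i.succAbove Fin.succ).det
            = ∑ i ∈ ({0, Fin.last m} : Finset (Fin (m+1))),
              (-1 : ℝ[X]) ^ (i : ℕ) * charmatrix A i 0 *
              ((charmatrix A).submatrix i.succAbove Fin.succ).det := by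
          symm
          apply Finset.sum_subset (Finset.subset_univ _)
          intro i _ hi
          simp only [Finset.mem_insert, Finset.mem_singleton, not_or] at hi
          obtain ⟨hi0, hil⟩ := hi
          have h1 : charmatrix A i 0 = 0 := by
            rw [charmatrix_apply_ne _ _ _ hi0]
            have : A i 0 = 0 := by
              simp only [hA, companionOf]
              rw [if_neg (by simp),
                if_neg (fun h => hil (by ext; simp [h, Fin.val_last]))]
            rw [this, map_zero, neg_zero]
          rw [h1, mul_zero, zero_mul]
        rw [hsum, Finset.sum_pair hne]
        have h00 : charmatrix A 0 0 = X := by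
          rw [charmatrix_apply_eq]
          have : A 0 0 = 0 := by
            simp only [hA, companionOf]
            rw [if_neg (by simp), if_neg (by simp; omega)]
          rw [this, map_zero, sub_zero]
        have hsub0 : (charmatrix A).submatrix (0 : Fin (m+1)).succAbove Fin.succ
            = charmatrix (companionOf m c) := by
          rw [Fin.succAbove_zero]
          ext i j
          simp only [submatrix_apply, charmatrix_apply, Matrix.diagonal_apply, Fin.succ_inj]
          congr 2
          simp only [hA, companionOf, Fin.val_succ]
          have hi := i.isLt
          have hj := j.isLt
          split_ifs <;> first | rfl | omega |
            (rw [show m + 1 - ((j:ℕ) + 1) = m - (j:ℕ) by omega])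
        have hlast0 : charmatrix A (Fin.last m) 0 = -C (c (m + 1)) := by
          rw [charmatrix_apply_ne _ _ _ hne.symm]
          congr 1
          have hv : ((Fin.last m : Fin (m+1)) : ℕ) = m := Fin.val_last m
          have hv0 : (((0 : Fin (m+1))) : ℕ) = 0 := rfl
          simp only [hA, companionOf, hv, hv0]
          rw [if_neg (by omega), if_pos (by omega)]
          norm_num
        have hsubl : ((charmatrix A).submatrix (Fin.last m).succAbove Fin.succ).det
            = (-1 : ℝ[X]) ^ m := by
          rw [Fin.succAbove_last]
          rw [Matrix.det_of_lowerTriangular _ ?ht]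
          case ht =>
            intro i j hij
            have hij' : (i : ℕ) < (j : ℕ) := hij
            simp only [submatrix_apply]
            rw [charmatrix_apply_ne _ _ _ (by
              intro h
              have := congrArg (Fin.val) h
              simp [Fin.val_succ] at this
              omega)]
            have : A i.castSucc j.succ = 0 := by
              simp only [hA, companionOf, Fin.coe_castSucc, Fin.val_succ]
              rw [if_neg (by omega), if_neg (by omega)]
            rw [this, map_zero, neg_zero]
          have hdiag : ∀ i : Fin m,
              (charmatrix A).submatrix Fin.castSucc Fin.succ i i = -1 := by
            intro i
            simp only [submatrix_apply]
            rw [charmatrix_apply_ne _ _ _ (by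
              intro h
              have := congrArg (Fin.val) h
              simp [Fin.val_succ] at this)]
            have : A i.castSucc i.succ = 1 := by
              simp [hA, companionOf, Fin.coe_castSucc, Fin.val_succ]
            rw [this, Polynomial.C_1]
          rw [Finset.prod_congr rfl (fun i _ => hdiag i)]
          simp
        rw [h00, hsub0, hlast0, hsubl]
        have hdet : (charmatrix (companionOf m c)).det = polyOf m c := ih c
        rw [show (charmatrix (companionOf m c)).det = (companionOf m c).charpoly from rfl, ih c]
        rw [polyOf_succ]
        have : ((-1 : ℝ[X]) ^ ((Fin.last m : Fin (m+1)) : ℕ)) * (-C (c (m+1))) * (-1 : ℝ[X])^m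
            = - C (c (m+1)) := by
          rw [Fin.val_last, mul_comm, ← mul_assoc, ← pow_add, Even.neg_one_pow ⟨m, rfl⟩, one_mul]
        rw [this]
        have h0v : (((0 : Fin (m+1))) : ℕ) = 0 := rfl
        rw [h0v, pow_zero]
        ring

lemma eval_polyOf (n : ℕ) (c : ℕ → ℝ) (t : ℝ) :
    (polyOf n c).eval t = t ^ n - ∑ k ∈ Finset.Icc 1 n, c k * t ^ (n - k) := by
  simp [polyOf, eval_finset_sum]

lemma deriv_eval_polyOf (n : ℕ) (c : ℕ → ℝ) (t : ℝ) :
    (derivative (polyOf n c)).eval t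
      = n * t ^ (n - 1) - ∑ k ∈ Finset.Icc 1 n, c k * (((n - k : ℕ) : ℝ) * t ^ (n - k - 1)) := by
  simp [polyOf, derivative_sum, derivative_C_mul, derivative_X_pow, eval_finset_sum]

lemma exists_perron_root (n : ℕ) (hn : 1 ≤ n) (c : ℕ → ℝ)
    (hc : ∀ k ∈ Finset.Icc 1 n, 0 ≤ c k) (k₀ : ℕ) (hk₀ : k₀ ∈ Finset.Icc 1 n)
    (hck₀ : 0 < c k₀) :
    ∃ ρ : ℝ, 0 < ρ ∧ (polyOf n c).eval ρ = 0 ∧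
      (∀ t : ℝ, ρ < t → 0 < (polyOf n c).eval t) ∧
      0 < (derivative (polyOf n c)).eval ρ := by
  obtain ⟨hk₀1, hk₀n⟩ := Finset.mem_Icc.mp hk₀
  -- small point with negative value
  set ε : ℝ := min 1 (c k₀ / 2) with hε
  have hε0 : 0 < ε := lt_min one_pos (by linarith)
  have hε1 : ε ≤ 1 := min_le_left _ _
  have hεneg : (polyOf n c).eval ε < 0 := by
    rw [eval_polyOf]
    have h1 : c k₀ * ε ^ (n - k₀) ≤ ∑ k ∈ Finset.Icc 1 n, c k * ε ^ (n - k) :=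
      Finset.single_le_sum (f := fun k => c k * ε ^ (n - k))
        (fun k hk => mul_nonneg (hc k hk) (by positivity)) hk₀
    have h2 : ε ^ n < c k₀ * ε ^ (n - k₀) := by
      have hεk : ε ^ k₀ < c k₀ := by
        calc ε ^ k₀ ≤ ε ^ 1 := pow_le_pow_of_le_one hε0.le hε1 hk₀1
        _ = ε := pow_one ε
        _ ≤ c k₀ / 2 := min_le_right _ _
        _ < c k₀ := by linarith
      calc ε ^ n = ε ^ (n - k₀) * ε ^ k₀ := by
            rw [← pow_add]; congr 1; omega
        _ < ε ^ (n - k₀) * c k₀ := by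
            apply mul_lt_mul_of_pos_left hεk (by positivity)
        _ = c k₀ * ε ^ (n - k₀) := by ring
    linarith
  -- large point with positive value
  set T : ℝ := 1 + ∑ k ∈ Finset.Icc 1 n, c k with hT
  have hsumc : 0 ≤ ∑ k ∈ Finset.Icc 1 n, c k := Finset.sum_nonneg hc
  have hT1 : 1 ≤ T := by rw [hT]; linarith
  have hT0 : 0 < T := by linarith
  have hTpos : 0 < (polyOf n c).eval T := by
    rw [eval_polyOf]
    have h1 : ∑ k ∈ Finset.Icc 1 n, c k * T ^ (n - k)
        ≤ (∑ k ∈ Finset.Icc 1 n, c k) * T ^ (n - 1) := by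
      rw [Finset.sum_mul]
      apply Finset.sum_le_sum
      intro k hk
      obtain ⟨hk1, hkn⟩ := Finset.mem_Icc.mp hk
      exact mul_le_mul_of_nonneg_left (pow_le_pow_right₀ hT1 (by omega)) (hc k hk)
    have h2 : (∑ k ∈ Finset.Icc 1 n, c k) * T ^ (n - 1) < T * T ^ (n - 1) := by
      apply mul_lt_mul_of_pos_right (by rw [hT]; linarith) (by positivity)
    have h3 : T * T ^ (n - 1) = T ^ n := by
      rw [← pow_succ']; congr 1; omega
    linarith
  -- IVT
  have hcont : ContinuousOn (fun t => (polyOf n c).eval t) (Set.Icc ε T) :=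
    (Polynomial.continuous _).continuousOn
  have hεT : ε ≤ T := le_trans hε1 hT1
  have h0mem : (0 : ℝ) ∈ Set.Icc ((polyOf n c).eval ε) ((polyOf n c).eval T) :=
    ⟨hεneg.le, hTpos.le⟩
  obtain ⟨ρ, hρmem, hρroot⟩ := intermediate_value_Icc hεT hcont h0mem
  have hρ0 : 0 < ρ := lt_of_lt_of_le hε0 hρmem.1
  have hroot : (polyOf n c).eval ρ = 0 := hρroot
  have hrootsum : ρ ^ n = ∑ k ∈ Finset.Icc 1 n, c k * ρ ^ (n - k) := by
    have := hroot
    rw [eval_polyOf] at this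
    linarith
  refine ⟨ρ, hρ0, hroot, ?_, ?_⟩
  · -- strict positivity beyond ρ
    intro t ht
    have htpos : 0 < t := lt_trans hρ0 ht
    have key : ρ ^ n * (polyOf n c).eval t
        = ∑ k ∈ Finset.Icc 1 n, c k * (t ^ (n - k) * ρ ^ (n - k) * (t ^ k - ρ ^ k)) := by
      rw [eval_polyOf, mul_sub]
      have e1 : ρ ^ n * t ^ n = ∑ k ∈ Finset.Icc 1 n, c k * (ρ ^ (n - k) * t ^ n) := by
        rw [hrootsum, Finset.sum_mul]
        apply Finset.sum_congr rfl; intro k hk; ring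
      rw [e1, Finset.mul_sum, ← Finset.sum_sub_distrib]
      apply Finset.sum_congr rfl
      intro k hk
      obtain ⟨hk1, hkn⟩ := Finset.mem_Icc.mp hk
      have et : t ^ n = t ^ (n - k) * t ^ k := by rw [← pow_add]; congr 1; omega
      have er : ρ ^ n = ρ ^ (n - k) * ρ ^ k := by rw [← pow_add]; congr 1; omega
      rw [et, er]; ring
    have hpos : 0 < ∑ k ∈ Finset.Icc 1 n, c k * (t ^ (n - k) * ρ ^ (n - k) * (t ^ k - ρ ^ k)) := by
      apply Finset.sum_pos' ?_ ⟨k₀, hk₀, ?_⟩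
      · intro k hk
        obtain ⟨hk1, hkn⟩ := Finset.mem_Icc.mp hk
        have : ρ ^ k ≤ t ^ k := pow_le_pow_left₀ hρ0.le ht.le k
        apply mul_nonneg (hc k hk)
        apply mul_nonneg (mul_nonneg (by positivity) (by positivity))
        linarith
      · have : ρ ^ k₀ < t ^ k₀ := pow_lt_pow_left₀ ht hρ0.le (by omega)
        apply mul_pos hck₀
        apply mul_pos (mul_pos (by positivity) (by positivity))
        linarith
    nlinarith [pow_pos hρ0 n]
  · -- derivative positive at ρ
    have key : ρ * (derivative (polyOf n c)).eval ρ
        = ∑ k ∈ Finset.Icc 1 n, c k * ((k : ℝ) * ρ ^ (n - k)) := by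
      rw [deriv_eval_polyOf, mul_sub]
      have e1 : ρ * ((n : ℝ) * ρ ^ (n - 1)) = (n : ℝ) * ρ ^ n := by
        have h : ρ ^ (n - 1) * ρ = ρ ^ n := by rw [← pow_succ]; congr 1; omega
        rw [← h]; ring
      have e2 : ρ * ∑ k ∈ Finset.Icc 1 n, c k * (((n - k : ℕ) : ℝ) * ρ ^ (n - k - 1))
          = ∑ k ∈ Finset.Icc 1 n, c k * (((n - k : ℕ) : ℝ) * ρ ^ (n - k)) := by
        rw [Finset.mul_sum]
        apply Finset.sum_congr rfl
        intro k hk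
        obtain ⟨hk1, hkn⟩ := Finset.mem_Icc.mp hk
        rcases Nat.eq_or_lt_of_le hkn with hkeq | hklt
        · rw [hkeq]; simp
        · have h : ρ ^ (n - k - 1) * ρ = ρ ^ (n - k) := by rw [← pow_succ]; congr 1; omega
          rw [← h]; ring
      rw [e1, e2]
      have e3 : (n : ℝ) * ρ ^ n = ∑ k ∈ Finset.Icc 1 n, c k * ((n : ℝ) * ρ ^ (n - k)) := by
        rw [hrootsum, Finset.mul_sum]
        apply Finset.sum_congr rfl; intro k hk; ring
      rw [e3, ← Finset.sum_sub_distrib]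
      apply Finset.sum_congr rfl
      intro k hk
      obtain ⟨hk1, hkn⟩ := Finset.mem_Icc.mp hk
      have : ((n - k : ℕ) : ℝ) = (n : ℝ) - (k : ℝ) := by
        push_cast [Nat.cast_sub hkn]; ring
      rw [this]; ring
    have hpos : 0 < ∑ k ∈ Finset.Icc 1 n, c k * ((k : ℝ) * ρ ^ (n - k)) := by
      apply Finset.sum_pos' ?_ ⟨k₀, hk₀, ?_⟩
      · intro k hk
        obtain ⟨hk1, hkn⟩ := Finset.mem_Icc.mp hk
        apply mul_nonneg (hc k hk)
        positivity
      · apply mul_pos hck₀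
        apply mul_pos _ (by positivity)
        exact_mod_cast Nat.cast_pos.mpr (by omega)
    nlinarith [key, hpos, hρ0]

lemma map_polyOf (n : ℕ) (c : ℕ → ℝ) :
    (polyOf n c).map (algebraMap ℝ ℂ)
      = X ^ n - ∑ k ∈ Finset.Icc 1 n, Polynomial.C ((c k : ℂ)) * X ^ (n - k) := by
  simp [polyOf, Polynomial.map_sub, Polynomial.map_pow, Polynomial.map_sum,
    Polynomial.map_mul, Polynomial.map_C]

/-- Cauchy: `p` is weakly spectrally Perron iff `d := gcd {k : c k ≠ 0} ≠ 0`,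
i.e. iff some coefficient `c k` is positive. -/
theorem cauchy_weakly_spectrally_perron (n : ℕ) (hn : 1 ≤ n) (c : ℕ → ℝ)
    (hc : ∀ k ∈ Finset.Icc 1 n, 0 ≤ c k) :
    WeaklySpectrallyPerron (companionOf n c) ↔
      ((Finset.Icc 1 n).filter (fun k => c k ≠ 0)).gcd id ≠ 0 := by
  have hspec : specPoly (companionOf n c) = (polyOf n c).map (algebraMap ℝ ℂ) := by
    rw [specPoly, charpoly_companionOf]
  constructor
  · rintro ⟨ρ, hρ0, hmult, _⟩
    intro hgcd
    have hall : ∀ k ∈ Finset.Icc 1 n, c k = 0 := by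
      intro k hk
      by_contra hck
      have hkmem : k ∈ (Finset.Icc 1 n).filter (fun k => c k ≠ 0) :=
        Finset.mem_filter.mpr ⟨hk, hck⟩
      have := Finset.gcd_eq_zero_iff.mp hgcd k hkmem
      simp only [id] at this
      obtain ⟨hk1, -⟩ := Finset.mem_Icc.mp hk
      omega
    have hp : polyOf n c = X ^ n := by
      unfold polyOf
      rw [Finset.sum_congr rfl (fun k hk => by rw [hall k hk, map_zero, zero_mul])]
      simp
    rw [hspec, hp] at hmult
    have hρne : ((ρ : ℂ)) ≠ 0 := by exact_mod_cast hρ0.ne'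
    have : Polynomial.rootMultiplicity (ρ : ℂ) ((X ^ n : ℝ[X]).map (algebraMap ℝ ℂ)) = 0 := by
      apply rootMultiplicity_eq_zero
      simp only [Polynomial.map_pow, Polynomial.map_X, IsRoot, eval_pow, eval_X]
      exact pow_ne_zero n hρne
    omega
  · intro hgcd
    have hex : ∃ k₀ ∈ Finset.Icc 1 n, c k₀ ≠ 0 := by
      by_contra h
      push_neg at h
      apply hgcd
      have : (Finset.Icc 1 n).filter (fun k => c k ≠ 0) = ∅ := by
        apply Finset.filter_eq_empty_iff.mpr
        intro k hk
        simpa using h k hk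
      rw [this, Finset.gcd_empty]
    obtain ⟨k₀, hk₀, hck₀⟩ := hex
    have hck₀' : 0 < c k₀ := (hc k₀ hk₀).lt_of_ne (Ne.symm hck₀)
    obtain ⟨ρ, hρ0, hroot, hmono, hderiv⟩ := exists_perron_root n hn c hc k₀ hk₀ hck₀'
    have hp0 : polyOf n c ≠ 0 := by
      intro h
      rw [h] at hderiv
      simp at hderiv
    set q := (polyOf n c).map (algebraMap ℝ ℂ) with hq
    have hq0 : q ≠ 0 := by
      rw [hq, Polynomial.map_ne_zero_iff (algebraMap ℝ ℂ).injective]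
      exact hp0
    have hqroot : q.IsRoot (ρ : ℂ) := by
      rw [IsRoot, hq, ← Complex.coe_algebraMap, eval_map, eval₂_at_apply, hroot, map_zero]
    have hqderiv : ¬ (derivative q).IsRoot (ρ : ℂ) := by
      rw [IsRoot, hq, derivative_map, ← Complex.coe_algebraMap, eval_map, eval₂_at_apply]
      intro h
      rw [_root_.map_eq_zero] at h
      linarith
    refine ⟨ρ, hρ0, ?_, ?_⟩
    · rw [hspec]
      have h1 : 0 < q.rootMultiplicity (ρ : ℂ) := (rootMultiplicity_pos hq0).mpr hqroot
      have h2 : (derivative q).rootMultiplicity (ρ : ℂ) = q.rootMultiplicity (ρ : ℂ) - 1 :=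
        derivative_rootMultiplicity_of_root hqroot
      have h3 : (derivative q).rootMultiplicity (ρ : ℂ) = 0 := rootMultiplicity_eq_zero hqderiv
      omega
    · intro z hz
      rw [hspec] at hz
      have hzsum : z ^ n = ∑ k ∈ Finset.Icc 1 n, (c k : ℂ) * z ^ (n - k) := by
        have := hz
        rw [IsRoot, hq, map_polyOf] at this
        simp only [eval_sub, eval_pow, eval_X, eval_finset_sum, eval_mul, eval_C] at this
        linear_combination this
      have habs : ‖z‖ ^ n ≤ ∑ k ∈ Finset.Icc 1 n, c k * ‖z‖ ^ (n - k) := by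
        calc ‖z‖ ^ n = ‖z ^ n‖ := by rw [norm_pow]
          _ = ‖∑ k ∈ Finset.Icc 1 n, (c k : ℂ) * z ^ (n - k)‖ := by rw [hzsum]
          _ ≤ ∑ k ∈ Finset.Icc 1 n, ‖(c k : ℂ) * z ^ (n - k)‖ :=
              norm_sum_le _ _
          _ = ∑ k ∈ Finset.Icc 1 n, c k * ‖z‖ ^ (n - k) := by
              apply Finset.sum_congr rfl
              intro k hk
              rw [norm_mul, norm_pow, Complex.norm_real, Real.norm_of_nonneg (hc k hk)]
      by_contra hlt
      push_neg at hlt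
      have := hmono ‖z‖ hlt
      rw [eval_polyOf] at this
      linarith
end

section
/- Let p(t) = t^n - c_1 t^{n-1} - ... - c_n with all c_k ≥ 0, let I be the set of indices k with c_k ≠ 0, and let d = gcd of the elements of I. Then p is spectrally Perron if and only if d = 1. -/
open Matrix Polynomial Finset

/-! ### Auxiliary lemmas -/

lemma charmatrix_submatrix' {R : Type*} [CommRing R] {n m : ℕ}
    (A : Matrix (Fin n) (Fin n) R) (f : Fin m → Fin n) (hf : Function.Injective f) :
    (charmatrix A).submatrix f f = charmatrix (A.submatrix f f) := by
  ext i j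
  by_cases h : i = j
  · subst h; simp [Matrix.submatrix_apply, charmatrix_apply_eq]
  · simp [Matrix.submatrix_apply, charmatrix_apply_ne _ _ _ (hf.ne h),
      charmatrix_apply_ne _ _ _ h]

lemma companion_submatrix (m : ℕ) (c : ℕ → ℝ) :
    (companionOf (m + 2) c).submatrix (Fin.succ) (Fin.succ) = companionOf (m + 1) c := by
  ext i j
  simp only [Matrix.submatrix_apply, companionOf, Fin.val_succ]
  have h1 : ((i : ℕ) + 1 + 1 = (j : ℕ) + 1) ↔ ((i : ℕ) + 1 = (j : ℕ)) := by omega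
  have h2 : ((i : ℕ) + 1 = m + 2 - 1) ↔ ((i : ℕ) = m + 1 - 1) := by omega
  have h3 : (m + 2 - ((j : ℕ) + 1)) = (m + 1 - (j : ℕ)) := by omega
  simp [h1, h2, h3]

lemma charpoly_companion (c : ℕ → ℝ) (m : ℕ) :
    (companionOf (m + 1) c).charpoly =
      X ^ (m + 1) - ∑ k ∈ Finset.Icc 1 (m + 1), Polynomial.C (c k) * X ^ (m + 1 - k) := by
  induction m with
  | zero =>
      rw [Matrix.charpoly, Matrix.det_fin_one]
      simp [charmatrix_apply_eq, companionOf]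
  | succ m ih =>
      set A := companionOf (m + 2) c with hA
      rw [Matrix.charpoly, Matrix.det_succ_column_zero, Fin.sum_univ_succ]
      have h00 : charmatrix A 0 0 = X := by
        rw [charmatrix_apply_eq]
        have : A 0 0 = 0 := by simp [hA, companionOf]
        rw [this]; simp
      have hsub0 : ((charmatrix A).submatrix (Fin.succAbove 0) Fin.succ).det
          = (companionOf (m + 1) c).charpoly := by
        rw [Fin.succAbove_zero, charmatrix_submatrix' _ _ (Fin.succ_injective _),
          companion_submatrix]
        rfl
      have hmain := Finset.sum_eq_single (M := Polynomial ℝ) (s := Finset.univ)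
        (f := fun i : Fin (m+1) => (-1 : Polynomial ℝ)^((i.succ : Fin (m+2)) : ℕ) *
          charmatrix A i.succ 0 *
          det ((charmatrix A).submatrix (Fin.succAbove i.succ) Fin.succ))
        (Fin.last m)
        (by
          intro i _ hne
          have hz : A i.succ 0 = 0 := by
            have hi : (i : ℕ) < m := by
              have h1 := i.isLt
              have h2 : (i : ℕ) ≠ m := fun h => hne (Fin.ext (by simp [h]))
              omega
            simp [hA, companionOf, Fin.val_succ]
            omega
          have : charmatrix A i.succ 0 = 0 := by
            rw [charmatrix_apply_ne _ _ _ (Fin.succ_ne_zero i), hz]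
            simp
          simp [this, hz])
        (by intro h; exact absurd (Finset.mem_univ _) h)
      rw [hmain]
      beta_reduce
      have hpow : (((Fin.last m).succ : Fin (m + 2)) : ℕ) = m + 1 := by simp
      have hentry : charmatrix A ((Fin.last m).succ) 0 = -Polynomial.C (c (m + 2)) := by
        rw [charmatrix_apply_ne _ _ _ (by simp [Fin.ext_iff])]
        have : A ((Fin.last m).succ) 0 = c (m + 2) := by simp [hA, companionOf]
        rw [this]
      have hdet : det ((charmatrix A).submatrix ((Fin.last m).succ.succAbove) Fin.succ)
          = (-1 : Polynomial ℝ) ^ (m + 1) := by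
        rw [Fin.succ_last, Fin.succAbove_last]
        have hBT : ((charmatrix A).submatrix Fin.castSucc Fin.succ).BlockTriangular
            OrderDual.toDual := by
          intro i j hij
          have hij' : (i : ℕ) < (j : ℕ) := hij
          rw [Matrix.submatrix_apply,
            charmatrix_apply_ne _ _ _ (by simp [Fin.ext_iff]; omega)]
          have h1 : ¬((i : ℕ) + 1 = (j : ℕ) + 1) := by omega
          have h2 : ¬((i : ℕ) = m + 1) := by have := i.isLt; omega
          have : A i.castSucc j.succ = 0 := by simp [hA, companionOf, h1, h2, hij'.ne]
          rw [this]; simp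
        rw [Matrix.det_of_lowerTriangular _ hBT]
        have hdiag : ∀ i : Fin (m + 1),
            (charmatrix A).submatrix Fin.castSucc Fin.succ i i = -1 := by
          intro i
          rw [Matrix.submatrix_apply,
            charmatrix_apply_ne _ _ _ (by simp [Fin.ext_iff])]
          have : A i.castSucc i.succ = 1 := by simp [hA, companionOf]
          rw [this]; simp
        rw [Finset.prod_congr rfl (fun i _ => hdiag i), Finset.prod_const,
          Finset.card_univ, Fintype.card_fin]
      have hsign : ((-1 : Polynomial ℝ) ^ (m + 1)) * (-Polynomial.C (c (m + 2))) *
          ((-1 : Polynomial ℝ) ^ (m + 1)) = -Polynomial.C (c (m + 2)) := by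
        have h11 : ((-1 : Polynomial ℝ) ^ (m + 1)) * ((-1 : Polynomial ℝ) ^ (m + 1)) = 1 := by
          rw [← pow_add]; exact Even.neg_one_pow ⟨m + 1, by ring⟩
        calc ((-1 : Polynomial ℝ) ^ (m + 1)) * (-Polynomial.C (c (m + 2))) *
              ((-1 : Polynomial ℝ) ^ (m + 1))
            = ((-1 : Polynomial ℝ) ^ (m + 1)) * ((-1 : Polynomial ℝ) ^ (m + 1)) *
              (-Polynomial.C (c (m + 2))) := by ring
          _ = -Polynomial.C (c (m + 2)) := by rw [h11, one_mul]
      rw [h00, hsub0, hentry, hdet, hpow, ih]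
      simp only [Fin.val_zero, pow_zero, one_mul]
      rw [hsign]
      rw [Finset.sum_Icc_succ_top (by omega : 1 ≤ m + 2)]
      rw [mul_sub, Finset.mul_sum]
      have hs : ∑ k ∈ Finset.Icc 1 (m + 1), X * (Polynomial.C (c k) * X ^ (m + 1 - k))
          = ∑ k ∈ Finset.Icc 1 (m + 1), Polynomial.C (c k) * X ^ (m + 2 - k) := by
        refine Finset.sum_congr rfl (fun k hk => ?_)
        have hk2 := (Finset.mem_Icc.mp hk).2
        have he : m + 2 - k = (m + 1 - k) + 1 := by omega
        rw [he, pow_succ]; ring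
      rw [hs, show m + 2 - (m + 2) = 0 from by omega]
      ring

noncomputable def PC (n : ℕ) (c : ℕ → ℝ) : Polynomial ℂ :=
  X ^ n - ∑ k ∈ Finset.Icc 1 n, Polynomial.C ((c k : ℂ)) * X ^ (n - k)

lemma specPoly_companionOf (n : ℕ) (hn : 1 ≤ n) (c : ℕ → ℝ) :
    specPoly (companionOf n c) = PC n c := by
  obtain ⟨m, rfl⟩ : ∃ m, n = m + 1 := ⟨n - 1, by omega⟩
  rw [specPoly, charpoly_companion, PC]
  rw [Polynomial.map_sub, Polynomial.map_pow, map_X, Polynomial.map_sum]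
  congr 1
  refine Finset.sum_congr rfl fun k _ => ?_
  rw [Polynomial.map_mul, Polynomial.map_pow, map_X, map_C]
  norm_num

lemma eval_PC (n : ℕ) (c : ℕ → ℝ) (z : ℂ) :
    (PC n c).eval z = z ^ n - ∑ k ∈ Finset.Icc 1 n, (c k : ℂ) * z ^ (n - k) := by
  simp [PC, eval_finset_sum]

lemma PC_ne_zero (n : ℕ) (c : ℕ → ℝ) : PC n c ≠ 0 := by
  intro h
  have hco : (PC n c).coeff n = 1 := by
    simp only [PC, coeff_sub, coeff_X_pow, if_pos rfl, finset_sum_coeff, coeff_C_mul]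
    have h2 : ∀ k ∈ Finset.Icc 1 n, (c k : ℂ) * (if n = n - k then (1:ℂ) else 0) = 0 := by
      intro k hk
      have := (Finset.mem_Icc.mp hk)
      rw [if_neg (by omega)]
      ring
    rw [Finset.sum_congr rfl h2]
    simp
  rw [h] at hco
  simp at hco

lemma isRoot_PC_iff (n : ℕ) (c : ℕ → ℝ) (z : ℂ) :
    (PC n c).IsRoot z ↔ z ^ n = ∑ k ∈ Finset.Icc 1 n, (c k : ℂ) * z ^ (n - k) := by
  rw [IsRoot, eval_PC, sub_eq_zero]

lemma eval_deriv_PC (n : ℕ) (c : ℕ → ℝ) (z : ℂ) :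
    (derivative (PC n c)).eval z
      = n * z ^ (n - 1) - ∑ k ∈ Finset.Icc 1 n, (c k : ℂ) * (n - k : ℕ) * z ^ (n - k - 1) := by
  simp only [PC, derivative_sub, derivative_X_pow, derivative_sum, derivative_C_mul,
    eval_sub, eval_mul, eval_pow, eval_X, eval_natCast, eval_finset_sum, eval_C]
  congr 1
  exact Finset.sum_congr rfl (fun k _ => by ring)

lemma re_eq_abs_complex {w : ℂ} (h : w.re = ‖w‖) : w = ((‖w‖ : ℝ) : ℂ) := by
  have h2 : w.re ^ 2 + w.im ^ 2 = ‖w‖ ^ 2 := by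
    rw [Complex.sq_norm, Complex.normSq_apply]; ring
  have h3 : ‖w‖ ^ 2 = w.re ^ 2 := by rw [h]
  have him2 : w.im ^ 2 = 0 := by linarith
  have him : w.im = 0 := sq_eq_zero_iff.mp him2
  apply Complex.ext <;> simp [him, ← h]

/-- Ostrovsky: `p` is spectrally Perron iff `d := gcd {k : c k ≠ 0} = 1`. -/
theorem ostrovsky_spectrally_perron (n : ℕ) (hn : 1 ≤ n) (c : ℕ → ℝ)
    (hc : ∀ k ∈ Finset.Icc 1 n, 0 ≤ c k) :
    SpectrallyPerron (companionOf n c) ↔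
      ((Finset.Icc 1 n).filter (fun k => c k ≠ 0)).gcd id = 1 := by
  have hPC := specPoly_companionOf n hn c
  have hPne := PC_ne_zero n c
  set S := (Finset.Icc 1 n).filter (fun k => c k ≠ 0) with hS
  constructor
  · rintro ⟨ρ, hρpos, hmult, hdom⟩
    rw [hPC] at hmult hdom
    have hroot : (PC n c).IsRoot (ρ:ℂ) :=
      (Polynomial.rootMultiplicity_pos hPne).mp (by omega)
    have hrooteq : ((ρ:ℂ)) ^ n = ∑ k ∈ Finset.Icc 1 n, (c k : ℂ) * (ρ:ℂ) ^ (n - k) :=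
      (isRoot_PC_iff n c _).mp hroot
    have hSne : S.Nonempty := by
      rw [Finset.nonempty_iff_ne_empty]
      intro hemp
      have hz : ∀ k ∈ Finset.Icc 1 n, c k = 0 := by
        intro k hk
        by_contra hk0
        have : k ∈ S := Finset.mem_filter.mpr ⟨hk, hk0⟩
        simp [hemp] at this
      have hρn : ((ρ:ℂ)) ^ n = 0 := by
        rw [hrooteq]
        exact Finset.sum_eq_zero fun k hk => by rw [hz k hk]; simp
      have hρ0 : (ρ:ℂ) = 0 := pow_eq_zero_iff (by omega) |>.mp hρn
      exact absurd (Complex.ofReal_eq_zero.mp hρ0) (ne_of_gt hρpos)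
    have hd0 : S.gcd id ≠ 0 := by
      obtain ⟨m, hm⟩ := hSne
      intro h0
      have h1 := Finset.gcd_eq_zero_iff.mp h0 m hm
      have hm1 := (Finset.mem_Icc.mp (Finset.mem_filter.mp hm).1).1
      simp only [id] at h1
      omega
    by_contra hne
    have hd2 : 2 ≤ S.gcd id := by omega
    set d := S.gcd id with hd
    set ω := Complex.exp (2 * Real.pi * Complex.I / d) with hw
    have hprim : IsPrimitiveRoot ω d := Complex.isPrimitiveRoot_exp d hd0
    have hωd : ω ^ d = 1 := hprim.pow_eq_one
    have hω1 : ω ≠ 1 := by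
      intro h1
      have hdd : (d:ℕ) ∣ 1 := (hprim.pow_eq_one_iff_dvd 1).mp (by rw [pow_one, h1])
      have := Nat.dvd_one.mp hdd
      omega
    have hωabs : ‖ω‖ = 1 := by
      have h1 : (‖ω‖) ^ d = 1 := by rw [← norm_pow, hωd]; simp
      rcases lt_trichotomy (‖ω‖) 1 with h | h | h
      · have := pow_lt_one₀ (norm_nonneg ω) h (by omega : d ≠ 0)
        linarith
      · exact h
      · have := one_lt_pow₀ h (by omega : d ≠ 0)
        linarith
    have hrootω : (PC n c).IsRoot (ω * ρ) := by
      rw [isRoot_PC_iff]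
      have hterm : ∀ k ∈ Finset.Icc 1 n,
          (c k : ℂ) * (ω * ρ) ^ (n - k) = ω ^ n * ((c k : ℂ) * (ρ:ℂ) ^ (n - k)) := by
        intro k hk
        by_cases hck : c k = 0
        · rw [hck]; simp
        · have hkS : k ∈ S := Finset.mem_filter.mpr ⟨hk, hck⟩
          have hdk : d ∣ k := Finset.gcd_dvd hkS
          have hωk : ω ^ k = 1 := by
            obtain ⟨e, rfl⟩ := hdk
            rw [pow_mul, hωd, one_pow]
          have hkn : k ≤ n := (Finset.mem_Icc.mp hk).2
          have hωnk : ω ^ (n - k) = ω ^ n := by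
            calc ω ^ (n-k) = ω ^ (n-k) * ω ^ k := by rw [hωk, mul_one]
            _ = ω ^ n := by rw [← pow_add]; congr 1; omega
          rw [mul_pow, hωnk]; ring
      rw [Finset.sum_congr rfl hterm, ← Finset.mul_sum, ← hrooteq, mul_pow]
    have hne' : (ω * ρ : ℂ) ≠ (ρ:ℂ) := by
      intro h
      apply hω1
      have hρne : (ρ:ℂ) ≠ 0 := Complex.ofReal_ne_zero.mpr hρpos.ne'
      have := mul_right_cancel₀ hρne (h.trans (one_mul (ρ:ℂ)).symm)
      exact this
    have hfin := hdom _ hrootω hne'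
    rw [norm_mul, hωabs, one_mul, Complex.norm_real, Real.norm_eq_abs, abs_of_pos hρpos] at hfin
    exact lt_irrefl _ hfin
  · intro hgcd
    have hSne : S.Nonempty := by
      rw [Finset.nonempty_iff_ne_empty]
      intro h
      rw [h] at hgcd
      simp at hgcd
    obtain ⟨m, hmS⟩ := hSne
    obtain ⟨hmIcc, hcm0⟩ := Finset.mem_filter.mp hmS
    obtain ⟨hm1, hmn⟩ := Finset.mem_Icc.mp hmIcc
    have hcm : 0 < c m := lt_of_le_of_ne (hc m hmIcc) (Ne.symm hcm0)
    set a : ℝ := min 1 (c m) with ha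
    set b : ℝ := 1 + ∑ k ∈ Finset.Icc 1 n, c k with hb
    have ha0 : 0 < a := lt_min one_pos hcm
    have ha1 : a ≤ 1 := min_le_left _ _
    have hsumnn : 0 ≤ ∑ k ∈ Finset.Icc 1 n, c k := Finset.sum_nonneg hc
    have hb1 : 1 ≤ b := by simp only [hb]; linarith
    have hab : a ≤ b := le_trans ha1 hb1
    set f : ℝ → ℝ := fun t => t ^ n - ∑ k ∈ Finset.Icc 1 n, c k * t ^ (n - k) with hf
    have hcont : Continuous f := by
      apply Continuous.sub (continuous_pow n)
      exact continuous_finset_sum _ (fun k _ => continuous_const.mul (continuous_pow _))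
    have hfa : f a ≤ 0 := by
      have h1 : c m * a ^ (n - m) ≤ ∑ k ∈ Finset.Icc 1 n, c k * a ^ (n - k) :=
        Finset.single_le_sum (f := fun k => c k * a ^ (n - k))
          (fun k hk => mul_nonneg (hc k hk) (pow_nonneg ha0.le _)) hmIcc
      have ham : a ^ m ≤ c m := by
        have h3 : a ^ m ≤ a ^ 1 := pow_le_pow_of_le_one ha0.le ha1 hm1
        rw [pow_one] at h3
        exact le_trans h3 (min_le_right _ _)
      have h2 : a ^ n ≤ c m * a ^ (n - m) := by
        calc a ^ n = a ^ (n - m) * a ^ m := by rw [← pow_add]; congr 1; omega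
        _ ≤ a ^ (n - m) * c m := mul_le_mul_of_nonneg_left ham (pow_nonneg ha0.le _)
        _ = c m * a ^ (n - m) := mul_comm _ _
      simp only [hf]
      linarith
    have hfb : 0 ≤ f b := by
      have hbk : ∀ k ∈ Finset.Icc 1 n, c k * b ^ (n - k) ≤ c k * b ^ (n - 1) := by
        intro k hk
        obtain ⟨hk1, hkn⟩ := Finset.mem_Icc.mp hk
        exact mul_le_mul_of_nonneg_left (pow_le_pow_right₀ hb1 (by omega)) (hc k hk)
      have h1 : ∑ k ∈ Finset.Icc 1 n, c k * b ^ (n - k)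
          ≤ (∑ k ∈ Finset.Icc 1 n, c k) * b ^ (n - 1) := by
        rw [Finset.sum_mul]
        exact Finset.sum_le_sum hbk
      have hbn : b ^ n = b * b ^ (n - 1) := by
        rw [← pow_succ']
        congr 1
        omega
      have hbpow : (0:ℝ) < b ^ (n - 1) := pow_pos (by linarith) _
      simp only [hf]
      have h2 : (∑ k ∈ Finset.Icc 1 n, c k) * b ^ (n - 1) = (b - 1) * b ^ (n - 1) := by
        simp only [hb]; ring_nf
      nlinarith
    obtain ⟨ρ, hρmem, hfρ⟩ := intermediate_value_Icc hab hcont.continuousOn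
      (Set.mem_Icc.mpr ⟨hfa, hfb⟩)
    have hρpos : 0 < ρ := lt_of_lt_of_le ha0 hρmem.1
    have hρeq : ρ ^ n = ∑ k ∈ Finset.Icc 1 n, c k * ρ ^ (n - k) := by
      have := hfρ
      simp only [hf] at this
      linarith [sub_eq_zero.mp this]
    have hrooteqC : ((ρ:ℂ)) ^ n = ∑ k ∈ Finset.Icc 1 n, (c k : ℂ) * (ρ:ℂ) ^ (n - k) := by
      calc ((ρ:ℂ)) ^ n = ((ρ ^ n : ℝ) : ℂ) := by push_cast; ring
      _ = (((∑ k ∈ Finset.Icc 1 n, c k * ρ ^ (n - k)) : ℝ) : ℂ) := by rw [hρeq]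
      _ = ∑ k ∈ Finset.Icc 1 n, (c k : ℂ) * (ρ:ℂ) ^ (n - k) := by push_cast; ring
    have hρC : ((ρ:ℂ)) ≠ 0 := Complex.ofReal_ne_zero.mpr hρpos.ne'
    have hroot : (PC n c).IsRoot (ρ:ℂ) := (isRoot_PC_iff _ _ _).mpr hrooteqC
    refine ⟨ρ, hρpos, ?_, ?_⟩
    · rw [hPC]
      have hderiv : ¬ (derivative (PC n c)).IsRoot (ρ:ℂ) := by
        intro hder
        rw [IsRoot, eval_deriv_PC] at hder
        set r : ℝ := n * ρ ^ (n - 1) - ∑ k ∈ Finset.Icc 1 n, c k * (n - k : ℕ) * ρ ^ (n - k - 1)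
          with hr
        have hcast : (n : ℂ) * (ρ:ℂ) ^ (n - 1)
            - ∑ k ∈ Finset.Icc 1 n, (c k : ℂ) * ((n - k : ℕ) : ℂ) * (ρ:ℂ) ^ (n - k - 1)
            = ((r : ℝ) : ℂ) := by
          rw [hr]; push_cast; ring
        rw [hcast] at hder
        have hr0 : r = 0 := Complex.ofReal_eq_zero.mp hder
        have hρr : ρ * r = ∑ k ∈ Finset.Icc 1 n, (k : ℝ) * (c k * ρ ^ (n - k)) := by
          rw [hr, mul_sub, Finset.mul_sum]
          have hterm : ∀ k ∈ Finset.Icc 1 n,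
              ρ * (c k * (n - k : ℕ) * ρ ^ (n - k - 1)) = ((n - k : ℕ) : ℝ) * (c k * ρ ^ (n - k)) := by
            intro k hk
            obtain ⟨hk1, hkn⟩ := Finset.mem_Icc.mp hk
            by_cases hkn' : k = n
            · subst hkn'; simp
            · obtain ⟨e, he⟩ : ∃ e, n - k = e + 1 := ⟨n - k - 1, by omega⟩
              have he1 : n - k - 1 = e := by omega
              rw [he1, he, pow_succ]
              ring
          rw [Finset.sum_congr rfl hterm]
          have hxn : ρ * ((n:ℝ) * ρ ^ (n - 1)) = (n:ℝ) * ρ ^ n := by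
            have he : n = (n - 1) + 1 := by omega
            calc ρ * ((n:ℝ) * ρ ^ (n - 1)) = (n:ℝ) * (ρ ^ (n-1) * ρ) := by ring
            _ = (n:ℝ) * ρ ^ n := by rw [← pow_succ, ← he]
          rw [hxn]
          rw [show (n:ℝ) * ρ ^ n = ∑ k ∈ Finset.Icc 1 n, (n:ℝ) * (c k * ρ ^ (n - k)) by
            rw [← Finset.mul_sum, ← hρeq]]
          rw [← Finset.sum_sub_distrib]
          refine Finset.sum_congr rfl fun k hk => ?_
          obtain ⟨hk1, hkn⟩ := Finset.mem_Icc.mp hk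
          have : ((n - k : ℕ) : ℝ) = (n:ℝ) - (k:ℝ) := by
            push_cast [Nat.cast_sub hkn]; ring
          rw [this]; ring
        have hpos : 0 < ∑ k ∈ Finset.Icc 1 n, (k : ℝ) * (c k * ρ ^ (n - k)) := by
          refine Finset.sum_pos' (fun k hk => ?_) ⟨m, hmIcc, ?_⟩
          · exact mul_nonneg (Nat.cast_nonneg _)
              (mul_nonneg (hc k hk) (pow_nonneg hρpos.le _))
          · have : (0:ℝ) < (m:ℝ) := by exact_mod_cast hm1
            positivity
        rw [hr0, mul_zero] at hρr
        linarith [hρr ▸ hpos]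
      have hpos1 : 0 < (PC n c).rootMultiplicity (ρ:ℂ) :=
        (rootMultiplicity_pos hPne).mpr hroot
      have hlt1 : ¬ 1 < (PC n c).rootMultiplicity (ρ:ℂ) := by
        intro h
        exact hderiv ((one_lt_rootMultiplicity_iff_isRoot hPne).mp h).2
      omega
    · intro z hz hzρ
      rw [hPC, isRoot_PC_iff] at hz
      set s := ‖z‖ with hs
      have hs0 : 0 ≤ s := norm_nonneg z
      have htri : s ^ n ≤ ∑ k ∈ Finset.Icc 1 n, c k * s ^ (n - k) := by
        calc s ^ n = ‖z ^ n‖ := by rw [norm_pow]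
        _ = ‖∑ k ∈ Finset.Icc 1 n, (c k : ℂ) * z ^ (n - k)‖ := by rw [hz]
        _ ≤ ∑ k ∈ Finset.Icc 1 n, ‖(c k : ℂ) * z ^ (n - k)‖ :=
            norm_sum_le _ _
        _ = ∑ k ∈ Finset.Icc 1 n, c k * s ^ (n - k) :=
            Finset.sum_congr rfl fun k hk => by
              rw [norm_mul, norm_pow, Complex.norm_real, Real.norm_eq_abs, abs_of_nonneg (hc k hk)]
      have hsle : s ≤ ρ := by
        by_contra hlt'
        push_neg at hlt'
        have hkey : ∀ k ∈ Finset.Icc 1 n,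
            c k * s ^ (n - k) * ρ ^ (n - 1) ≤ c k * ρ ^ (n - k) * s ^ (n - 1) := by
          intro k hk
          obtain ⟨hk1, hkn⟩ := Finset.mem_Icc.mp hk
          have e1 : n - 1 = (n - k) + (k - 1) := by omega
          rw [e1, pow_add, pow_add]
          have hps : ρ ^ (k - 1) ≤ s ^ (k - 1) := pow_le_pow_left₀ hρpos.le hlt'.le _
          have hnn : 0 ≤ c k * s ^ (n - k) * ρ ^ (n - k) :=
            mul_nonneg (mul_nonneg (hc k hk) (pow_nonneg hs0 _)) (pow_nonneg hρpos.le _)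
          calc c k * s ^ (n - k) * (ρ ^ (n - k) * ρ ^ (k - 1))
              = (c k * s ^ (n - k) * ρ ^ (n - k)) * ρ ^ (k - 1) := by ring
            _ ≤ (c k * s ^ (n - k) * ρ ^ (n - k)) * s ^ (k - 1) :=
                mul_le_mul_of_nonneg_left hps hnn
            _ = c k * ρ ^ (n - k) * (s ^ (n - k) * s ^ (k - 1)) := by ring
        have h1 : (∑ k ∈ Finset.Icc 1 n, c k * s ^ (n - k)) * ρ ^ (n - 1)
            ≤ (∑ k ∈ Finset.Icc 1 n, c k * ρ ^ (n - k)) * s ^ (n - 1) := by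
          rw [Finset.sum_mul, Finset.sum_mul]
          exact Finset.sum_le_sum hkey
        rw [← hρeq] at h1
        have hspos : 0 < s := lt_trans hρpos hlt'
        have h2 : ρ ^ n * s ^ (n - 1) < s ^ n * ρ ^ (n - 1) := by
          obtain ⟨e, he⟩ : ∃ e, n = e + 1 := ⟨n - 1, by omega⟩
          have he1 : n - 1 = e := by omega
          rw [he1, he, pow_succ, pow_succ]
          have hρp : (0:ℝ) < ρ ^ e := pow_pos hρpos _
          have hsp : (0:ℝ) < s ^ e := pow_pos hspos _
          nlinarith [mul_lt_mul_of_pos_left hlt' (mul_pos hρp hsp)]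
        have h3 : s ^ n * ρ ^ (n - 1) ≤ (∑ k ∈ Finset.Icc 1 n, c k * s ^ (n - k)) * ρ ^ (n - 1) :=
          mul_le_mul_of_nonneg_right htri (pow_nonneg hρpos.le _)
        linarith
      rcases lt_or_eq_of_le hsle with h | heq
      · exact h
      · exfalso
        set w : ℂ := (starRingEnd ℂ) (z ^ n) with hww
        have habsw : ‖w‖ = ρ ^ n := by
          rw [hww, Complex.norm_conj, norm_pow, ← hs, heq]
        have hmulz : w * z ^ n = ((ρ ^ (2 * n) : ℝ) : ℂ) := by
          rw [hww, mul_comm, Complex.mul_conj]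
          rw [Complex.normSq_eq_norm_sq, norm_pow, ← hs, heq]
          have h2n : ρ ^ (2 * n) = (ρ ^ n) ^ 2 := by rw [← pow_mul, Nat.mul_comm]
          rw [h2n]
        have habs_each : ∀ k ∈ Finset.Icc 1 n,
            ‖w * z ^ (n - k)‖ = ρ ^ (2 * n - k) := by
          intro k hk
          obtain ⟨hk1, hkn⟩ := Finset.mem_Icc.mp hk
          rw [norm_mul, habsw, norm_pow, ← hs, heq, ← pow_add]
          congr 1
          omega
        have hre : ∑ k ∈ Finset.Icc 1 n, c k * (w * z ^ (n - k)).re = ρ ^ (2 * n) := by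
          have h1 : w * z ^ n = ∑ k ∈ Finset.Icc 1 n, (c k : ℂ) * (w * z ^ (n - k)) := by
            calc w * z ^ n = w * ∑ k ∈ Finset.Icc 1 n, (c k : ℂ) * z ^ (n - k) := by rw [hz]
            _ = ∑ k ∈ Finset.Icc 1 n, (c k : ℂ) * (w * z ^ (n - k)) := by
                rw [Finset.mul_sum]
                exact Finset.sum_congr rfl fun k _ => by ring
          have h2 := congrArg Complex.re h1
          rw [hmulz] at h2
          rw [Complex.ofReal_re, Complex.re_sum] at h2
          simp only [Complex.re_ofReal_mul] at h2
          exact h2.symm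
        have hbound : ∀ k ∈ Finset.Icc 1 n,
            c k * (w * z ^ (n - k)).re ≤ c k * ρ ^ (2 * n - k) := fun k hk =>
          mul_le_mul_of_nonneg_left ((Complex.re_le_norm _).trans (habs_each k hk).le) (hc k hk)
        have hsum2 : ∑ k ∈ Finset.Icc 1 n, c k * ρ ^ (2 * n - k) = ρ ^ (2 * n) := by
          have h1 : ∀ k ∈ Finset.Icc 1 n,
              c k * ρ ^ (2 * n - k) = (c k * ρ ^ (n - k)) * ρ ^ n := by
            intro k hk
            obtain ⟨hk1, hkn⟩ := Finset.mem_Icc.mp hk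
            have he : 2 * n - k = (n - k) + n := by omega
            rw [he, pow_add]
            ring
          rw [Finset.sum_congr rfl h1, ← Finset.sum_mul, ← hρeq, ← pow_add]
          congr 1
          omega
        have heach := (Finset.sum_eq_sum_iff_of_le hbound).mp (by rw [hre, hsum2])
        have hzk : ∀ k ∈ S, z ^ k = ((ρ:ℂ)) ^ k := by
          intro k hkS
          obtain ⟨hkI, hck⟩ := Finset.mem_filter.mp hkS
          obtain ⟨hk1, hkn⟩ := Finset.mem_Icc.mp hkI
          have hck' : 0 < c k := lt_of_le_of_ne (hc k hkI) (Ne.symm hck)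
          have h4 : (w * z ^ (n - k)).re = ρ ^ (2 * n - k) :=
            mul_left_cancel₀ hck'.ne' (heach k hkI)
          have h4' : (w * z ^ (n - k)).re = ‖w * z ^ (n - k)‖ := by
            rw [h4, habs_each k hkI]
          have h5 : w * z ^ (n - k) = ((ρ ^ (2 * n - k) : ℝ) : ℂ) := by
            rw [re_eq_abs_complex h4', habs_each k hkI]
          have h6 : ((ρ ^ (2 * n) : ℝ) : ℂ) = ((ρ ^ (2 * n - k) : ℝ) : ℂ) * z ^ k := by
            rw [← hmulz, ← h5]
            rw [mul_assoc, ← pow_add]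
            congr 2
            omega
          have h7 : ((ρ:ℂ)) ^ (2 * n - k) * ((ρ:ℂ)) ^ k
              = ((ρ:ℂ)) ^ (2 * n - k) * z ^ k := by
            rw [← pow_add, show 2 * n - k + k = 2 * n by omega]
            push_cast at h6
            exact h6
          exact (mul_left_cancel₀ (pow_ne_zero _ hρC) h7).symm
        have hu1 : ∀ k ∈ S, (z * ((ρ:ℂ))⁻¹) ^ k = 1 := by
          intro k hkS
          rw [mul_pow, hzk k hkS, inv_pow, mul_inv_cancel₀ (pow_ne_zero _ hρC)]
        have hdvd : orderOf (z * ((ρ:ℂ))⁻¹) ∣ S.gcd id :=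
          Finset.dvd_gcd (fun b hb => orderOf_dvd_of_pow_eq_one (hu1 b hb))
        rw [hgcd] at hdvd
        have hu : z * ((ρ:ℂ))⁻¹ = 1 := orderOf_eq_one_iff.mp (Nat.dvd_one.mp hdvd)
        exact hzρ ((mul_inv_eq_one₀ hρC).mp hu)
end

section
/- The polynomial p(t) = t^3 - 2t^2 - t + 2 is spectrally Perron (its companion matrix has eigenvalues 2, 1, -1, with 2 simple and strictly dominant), but its companion matrix is not eventually nonnegative: for every k ≥ 3, the first column of C^k has a negative entry. -/
open Matrix Polynomial

private noncomputable def fAux (k : ℕ) : ℝ := 1 + ((-1 : ℝ) ^ k - 2 ^ k) / 3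

private lemma charpoly_eq :
    (!![0, 1, 0; 0, 0, 1; -2, 1, 2] : Matrix (Fin 3) (Fin 3) ℝ).charpoly
      = (X - C 1) * (X - C (-1)) * (X - C 2) := by
  rw [Matrix.charpoly, Matrix.det_fin_three]
  simp [charmatrix_apply_eq, charmatrix_apply_ne, Matrix.charmatrix]
  ring

private lemma specPoly_eq :
    specPoly (!![0, 1, 0; 0, 0, 1; -2, 1, 2] : Matrix (Fin 3) (Fin 3) ℝ)
      = (X - C 1) * (X - C (-1)) * (X - C 2) := by
  rw [specPoly, charpoly_eq]
  simp [Polynomial.map_mul]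

private lemma col_eq : ∀ k : ℕ, ∀ i : Fin 3,
    ((!![0, 1, 0; 0, 0, 1; -2, 1, 2] : Matrix (Fin 3) (Fin 3) ℝ) ^ k) i 0 = fAux (k + i.val) := by
  intro k
  induction k with
  | zero =>
    intro i
    fin_cases i <;> simp [fAux] <;> norm_num
  | succ n ih =>
    intro i
    rw [pow_succ', Matrix.mul_apply, Fin.sum_univ_three, ih 0, ih 1, ih 2]
    fin_cases i <;>
      simp [fAux, Matrix.cons_val_zero, Matrix.cons_val_one, pow_succ] <;> ring

private lemma fAux_neg {k : ℕ} (hk : 3 ≤ k) : fAux k < 0 := by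
  have h1 : ((-1 : ℝ)) ^ k ≤ 1 := by
    rcases Nat.even_or_odd k with h | h
    · rw [h.neg_one_pow]
    · rw [h.neg_one_pow]; norm_num
  have h2 : (8 : ℝ) ≤ 2 ^ k := by
    calc (8 : ℝ) = 2 ^ 3 := by norm_num
    _ ≤ 2 ^ k := by apply pow_le_pow_right₀ <;> norm_num [hk]
  have : (-1 : ℝ) ^ k - 2 ^ k ≤ 1 - 8 := by linarith
  rw [fAux]
  linarith

/-- The companion matrix of `p(t) = t^3 - 2t^2 - t + 2` is spectrally Perron,
but it is not eventually nonnegative: for every `k ≥ 3` the first column of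
`C^k` has a negative entry. -/
theorem example_spectrally_perron_not_eventually_nonneg :
    SpectrallyPerron (!![0, 1, 0; 0, 0, 1; -2, 1, 2] : Matrix (Fin 3) (Fin 3) ℝ) ∧
    (∀ k : ℕ, 3 ≤ k →
      ∃ i : Fin 3, ((!![0, 1, 0; 0, 0, 1; -2, 1, 2] : Matrix (Fin 3) (Fin 3) ℝ) ^ k) i 0 < 0) ∧
    ¬ ∃ k : ℕ, 0 < k ∧
      ∀ i j : Fin 3, 0 ≤ ((!![0, 1, 0; 0, 0, 1; -2, 1, 2] : Matrix (Fin 3) (Fin 3) ℝ) ^ k) i j := by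
  refine ⟨⟨2, by norm_num, ?_, ?_⟩, ?_, ?_⟩
  · rw [specPoly_eq]
    have h1 : ((X : ℂ[X]) - C 1) ≠ 0 := X_sub_C_ne_zero 1
    have h2 : ((X : ℂ[X]) - C (-1)) ≠ 0 := X_sub_C_ne_zero (-1)
    have h3 : ((X : ℂ[X]) - C 2) ≠ 0 := X_sub_C_ne_zero 2
    rw [rootMultiplicity_mul (mul_ne_zero (mul_ne_zero h1 h2) h3),
        rootMultiplicity_mul (mul_ne_zero h1 h2),
        rootMultiplicity_X_sub_C, rootMultiplicity_X_sub_C, rootMultiplicity_X_sub_C]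
    norm_num
  · intro z hz hz2
    rw [specPoly_eq] at hz
    simp only [IsRoot, eval_mul, eval_sub, eval_X, eval_C, mul_eq_zero, sub_eq_zero] at hz
    have hz2' : z ≠ 2 := by simpa using hz2
    rcases hz with (h | h) | h
    · rw [h]; norm_num
    · rw [h]; norm_num
    · exact absurd h hz2'
  · intro k hk
    exact ⟨0, by rw [col_eq k 0]; exact fAux_neg (by simpa using hk)⟩
  · rintro ⟨k, hk, h⟩
    have h1 := h 2 0
    rw [col_eq k 2, show ((2 : Fin 3) : ℕ) = 2 from rfl] at h1
    exact absurd h1 (not_le.mpr (fAux_neg (by omega)))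
end

section
/- In the digraph of the companion matrix of p(t) = t^n - c_1 t^{n-1} - ... - c_n with c_n > 0, the cycle lengths through vertex n are exactly the indices k with c_k > 0 together with sums thereof; consequently the gcd of all cycle lengths of the digraph equals gcd{k : c_k > 0}. -/
open Matrix Polynomial Finset

namespace CompanionAux

variable {n : ℕ} {c : ℕ → ℝ}

lemma comp_apply_last (hn : 1 ≤ n) (j : Fin n) :
    companionOf n c ⟨n - 1, Nat.sub_lt hn Nat.one_pos⟩ j = c (n - (j : ℕ)) := by
  have hj := j.isLt
  have h1 : ¬ (((⟨n - 1, by omega⟩ : Fin n) : ℕ) + 1 = (j : ℕ)) := by simp; omega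
  simp [companionOf, h1]

lemma comp_apply_mid (i j : Fin n) (hi : (i : ℕ) < n - 1) :
    companionOf n c i j = if (i : ℕ) + 1 = (j : ℕ) then 1 else 0 := by
  simp only [companionOf]
  split_ifs with h1 h2
  · rfl
  · omega
  · rfl

lemma comp_nonneg (hc : ∀ k ∈ Finset.Icc 1 n, 0 ≤ c k) (i j : Fin n) :
    0 ≤ companionOf n c i j := by
  have hj := j.isLt
  simp only [companionOf]
  split_ifs
  · norm_num
  · exact hc _ (by simp [Finset.mem_Icc]; omega)
  · exact le_refl 0

lemma pow_nonneg (hc : ∀ k ∈ Finset.Icc 1 n, 0 ≤ c k) (m : ℕ) (i j : Fin n) :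
    0 ≤ (companionOf n c ^ m) i j := by
  induction m generalizing i j with
  | zero => rw [pow_zero, Matrix.one_apply]; split <;> norm_num
  | succ m ih =>
      rw [pow_succ, Matrix.mul_apply]
      exact Finset.sum_nonneg fun x _ => mul_nonneg (ih i x) (comp_nonneg hc x j)

lemma pow_step (m : ℕ) (i j : Fin n) (hi : (i : ℕ) < n - 1) :
    (companionOf n c ^ (m + 1)) i j
      = (companionOf n c ^ m) ⟨(i : ℕ) + 1, by omega⟩ j := by
  rw [pow_succ', Matrix.mul_apply]
  rw [Finset.sum_eq_single (⟨(i : ℕ) + 1, by omega⟩ : Fin n)]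
  · rw [comp_apply_mid _ _ hi, if_pos (by simp), one_mul]
  · intro b _ hb
    rw [comp_apply_mid _ _ hi, if_neg, zero_mul]
    intro h; exact hb (Fin.ext h.symm)
  · simp

lemma climb : ∀ (s m : ℕ), s ≤ m → ∀ (i : Fin n) (hs : (i : ℕ) + s ≤ n - 1) (j : Fin n),
    (companionOf n c ^ m) i j
      = (companionOf n c ^ (m - s)) ⟨(i : ℕ) + s, by have := i.isLt; omega⟩ j := by
  intro s
  induction s with
  | zero => intro m hm i hs j; simp
  | succ s ih =>
      intro m hm i hs j
      have hilt := i.isLt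
      obtain ⟨m', rfl⟩ : ∃ m', m = m' + 1 := ⟨m - 1, by omega⟩
      rw [pow_step m' i j (by omega)]
      rw [ih m' (by omega) ⟨(i : ℕ) + 1, by omega⟩ (by simp; omega) j]
      have h1 : m' + 1 - (s + 1) = m' - s := by omega
      rw [h1]
      exact congrFun (congrArg _ (Fin.ext (by simp; omega))) j

/-- Any nonzero entry of `A^r` in the last row yields a closed-walk length. -/
lemma rowlem (hn : 1 ≤ n) (hc : ∀ k ∈ Finset.Icc 1 n, 0 ≤ c k) :
    ∀ (r : ℕ) (j : Fin n), (companionOf n c ^ r) ⟨n - 1, Nat.sub_lt hn Nat.one_pos⟩ j ≠ 0 →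
      r + ((n - 1) - (j : ℕ)) ∈ AddSubmonoid.closure
        (((Finset.Icc 1 n).filter (fun k => 0 < c k) : Finset ℕ) : Set ℕ) := by
  intro r
  induction r with
  | zero =>
      intro j hj
      rw [pow_zero, Matrix.one_apply] at hj
      have hje : ((⟨n - 1, by omega⟩ : Fin n) : ℕ) = (j : ℕ) := by
        by_contra h
        exact hj (if_neg (fun he => h (congrArg Fin.val he)))
      have : 0 + ((n - 1) - (j : ℕ)) = 0 := by simp at hje; omega
      rw [this]
      exact zero_mem _
  | succ r ih =>
      intro j hj
      have hjlt := j.isLt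
      rw [pow_succ, Matrix.mul_apply] at hj
      obtain ⟨x, -, hx⟩ := Finset.exists_ne_zero_of_sum_ne_zero hj
      have hx1 : (companionOf n c ^ r) ⟨n - 1, by omega⟩ x ≠ 0 := left_ne_zero_of_mul hx
      have hx2 : companionOf n c x j ≠ 0 := right_ne_zero_of_mul hx
      simp only [companionOf] at hx2
      by_cases h1 : (x : ℕ) + 1 = (j : ℕ)
      · have hmem := ih x hx1
        have harith : r + 1 + ((n - 1) - (j : ℕ)) = r + ((n - 1) - (x : ℕ)) := by omega
        rw [harith]; exact hmem
      · rw [if_neg h1] at hx2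
        by_cases h2 : (x : ℕ) = n - 1
        · rw [if_pos h2] at hx2
          have hck : 0 < c (n - (j : ℕ)) :=
            lt_of_le_of_ne (hc _ (by simp [Finset.mem_Icc]; omega)) (Ne.symm hx2)
          have hk : (n - (j : ℕ)) ∈ (Finset.Icc 1 n).filter (fun k => 0 < c k) := by
            simp only [Finset.mem_filter, Finset.mem_Icc]
            exact ⟨⟨by omega, by omega⟩, hck⟩
          have hx' : x = (⟨n - 1, by omega⟩ : Fin n) := Fin.ext h2
          rw [hx'] at hx1
          have h0 := ih _ hx1
          simp only [Nat.sub_self, Nat.add_zero] at h0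
          have harith : r + 1 + ((n - 1) - (j : ℕ)) = r + (n - (j : ℕ)) := by omega
          rw [harith]
          exact AddSubmonoid.add_mem _ h0 (AddSubmonoid.subset_closure (by
            simpa using hk))
        · rw [if_neg h2] at hx2; exact absurd rfl hx2

/-- A closed walk of length `k` through the last vertex, for `1 ≤ k ≤ n`. -/
lemma a_ret (hn : 1 ≤ n) (hc : ∀ k ∈ Finset.Icc 1 n, 0 ≤ c k)
    (k : ℕ) (hk1 : 1 ≤ k) (hk2 : k ≤ n) :
    c k ≤ (companionOf n c ^ k) ⟨n - 1, Nat.sub_lt hn Nat.one_pos⟩ ⟨n - 1, Nat.sub_lt hn Nat.one_pos⟩ := by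
  obtain ⟨k', rfl⟩ : ∃ k', k = k' + 1 := ⟨k - 1, by omega⟩
  rw [pow_succ', Matrix.mul_apply]
  have key : ∀ x : Fin n, 0 ≤ companionOf n c (⟨n - 1, by omega⟩ : Fin n) x *
      (companionOf n c ^ k') x ⟨n - 1, by omega⟩ :=
    fun x => mul_nonneg (comp_nonneg hc _ _) (pow_nonneg hc _ _ _)
  have hterm : companionOf n c (⟨n - 1, by omega⟩ : Fin n) (⟨n - (k' + 1), by omega⟩ : Fin n) *
      (companionOf n c ^ k') (⟨n - (k' + 1), by omega⟩ : Fin n) ⟨n - 1, by omega⟩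
        = c (k' + 1) := by
    rw [comp_apply_last hn]
    rw [climb k' k' (le_refl _) _ (by simp; omega)]
    have h1 : ((⟨n - (k' + 1), by omega⟩ : Fin n) : ℕ) = n - (k' + 1) := rfl
    rw [Nat.sub_self, pow_zero, Matrix.one_apply]
    rw [if_pos (Fin.ext (by simp; omega))]
    simp only [h1]
    have : n - (n - (k' + 1)) = k' + 1 := by omega
    rw [this, mul_one]
  calc c (k' + 1) = _ := hterm.symm
    _ ≤ _ := Finset.single_le_sum (fun x _ => key x) (Finset.mem_univ _)

/-- Supermultiplicativity of the last diagonal entry. -/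
lemma a_mul (hn : 1 ≤ n) (hc : ∀ k ∈ Finset.Icc 1 n, 0 ≤ c k) (p q : ℕ) :
    (companionOf n c ^ p) ⟨n - 1, Nat.sub_lt hn Nat.one_pos⟩ ⟨n - 1, Nat.sub_lt hn Nat.one_pos⟩ *
      (companionOf n c ^ q) ⟨n - 1, Nat.sub_lt hn Nat.one_pos⟩ ⟨n - 1, Nat.sub_lt hn Nat.one_pos⟩
      ≤ (companionOf n c ^ (p + q)) ⟨n - 1, Nat.sub_lt hn Nat.one_pos⟩ ⟨n - 1, Nat.sub_lt hn Nat.one_pos⟩ := by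
  rw [pow_add, Matrix.mul_apply]
  apply Finset.single_le_sum (f := fun x => (companionOf n c ^ p) ⟨n - 1, by omega⟩ x *
    (companionOf n c ^ q) x ⟨n - 1, by omega⟩)
  · intro x _
    exact mul_nonneg (pow_nonneg hc _ _ _) (pow_nonneg hc _ _ _)
  · exact Finset.mem_univ _

/-- Sums of lengths in `K` are realized by closed walks through the last vertex. -/
lemma pos_of_list (hn : 1 ≤ n) (hc : ∀ k ∈ Finset.Icc 1 n, 0 ≤ c k) :
    ∀ l : List ℕ, (∀ x ∈ l, x ∈ (Finset.Icc 1 n).filter (fun k => 0 < c k)) →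
      0 < (companionOf n c ^ l.sum) ⟨n - 1, Nat.sub_lt hn Nat.one_pos⟩ ⟨n - 1, Nat.sub_lt hn Nat.one_pos⟩ := by
  intro l
  induction l with
  | nil =>
      intro _
      simp only [List.sum_nil, pow_zero]
      rw [Matrix.one_apply_eq]
      norm_num
  | cons k l ih =>
      intro hl
      have hk := hl k List.mem_cons_self
      simp only [Finset.mem_filter, Finset.mem_Icc] at hk
      have hrec := ih (fun x hx => hl x (List.mem_cons_of_mem _ hx))
      have h1 : 0 < (companionOf n c ^ k) ⟨n - 1, by omega⟩ ⟨n - 1, by omega⟩ :=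
        lt_of_lt_of_le hk.2 (a_ret hn hc k hk.1.1 hk.1.2)
      calc (0:ℝ) < _ * _ := mul_pos h1 hrec
        _ ≤ _ := a_mul hn hc k l.sum

end CompanionAux

/-- In the digraph of the companion matrix of `p` (with `c n > 0`), the lengths
of the closed walks through vertex `n` (cycles together with sums thereof) are
exactly the elements of the additive monoid generated by
`K = {k : c k > 0}`; consequently the common divisors of all cycle lengths of
the digraph are exactly the common divisors of `K`, i.e. the gcd of all cycle
lengths equals `gcd K`. -/
theorem companion_digraph_cycles (n : ℕ) (hn : 1 ≤ n) (c : ℕ → ℝ)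
    (hc : ∀ k ∈ Finset.Icc 1 n, 0 ≤ c k) (hcn : 0 < c n) :
    (∀ m : ℕ, 0 < m →
      ((((companionOf n c) ^ m) ⟨n - 1, by omega⟩ ⟨n - 1, by omega⟩ ≠ 0) ↔
        m ∈ AddSubmonoid.closure
          (((Finset.Icc 1 n).filter (fun k => 0 < c k) : Finset ℕ) : Set ℕ))) ∧
    (∀ e : ℕ,
      (∀ m : ℕ, 0 < m → (∃ i, ((companionOf n c) ^ m) i i ≠ 0) → e ∣ m) ↔
        (∀ k ∈ (Finset.Icc 1 n).filter (fun k => 0 < c k), e ∣ k)) := by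
  constructor
  · intro m _
    constructor
    · intro h
      have := CompanionAux.rowlem hn hc m ⟨n - 1, by omega⟩ h
      simpa using this
    · intro h
      obtain ⟨l, hl, hsum⟩ := AddSubmonoid.exists_list_of_mem_closure h
      have hpos := CompanionAux.pos_of_list hn hc l
        (fun x hx => Finset.mem_coe.mp (hl x hx))
      rw [hsum] at hpos
      exact ne_of_gt hpos
  · intro e
    constructor
    · intro h k hk
      simp only [Finset.mem_filter, Finset.mem_Icc] at hk
      apply h k (by omega)
      refine ⟨⟨n - 1, by omega⟩, ?_⟩
      have hpos := CompanionAux.pos_of_list hn hc [k] (by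
        intro x hx
        simp only [List.mem_singleton] at hx
        subst hx
        simp only [Finset.mem_filter, Finset.mem_Icc]
        exact ⟨⟨hk.1.1, hk.1.2⟩, hk.2⟩)
      simp only [List.sum_cons, List.sum_nil, Nat.add_zero] at hpos
      exact ne_of_gt hpos
    · intro h m hm hex
      obtain ⟨i, hi⟩ := hex
      have hilt := i.isLt
      have hmem : m ∈ AddSubmonoid.closure
          (((Finset.Icc 1 n).filter (fun k => 0 < c k) : Finset ℕ) : Set ℕ) := by
        by_cases hv : (i : ℕ) = n - 1
        · have hieq : i = (⟨n - 1, by omega⟩ : Fin n) := Fin.ext hv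
          rw [hieq] at hi
          have := CompanionAux.rowlem hn hc m _ hi
          simpa using this
        · by_cases hms : (n - 1) - (i : ℕ) ≤ m
          · rw [CompanionAux.climb ((n - 1) - (i : ℕ)) m hms i (by omega) i] at hi
            have hlast : (⟨(i : ℕ) + ((n - 1) - (i : ℕ)), by omega⟩ : Fin n)
                = (⟨n - 1, by omega⟩ : Fin n) := Fin.ext (by simp; omega)
            rw [hlast] at hi
            have hcl := CompanionAux.rowlem hn hc (m - ((n - 1) - (i : ℕ))) i hi
            have harith : m - ((n - 1) - (i : ℕ)) + ((n - 1) - (i : ℕ)) = m := by omega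
            rwa [harith] at hcl
          · exfalso
            rw [CompanionAux.climb m m le_rfl i (by omega) i] at hi
            rw [Nat.sub_self, pow_zero, Matrix.one_apply] at hi
            rw [if_neg] at hi
            · exact hi rfl
            · intro hcon
              have : (i : ℕ) + m = (i : ℕ) := congrArg Fin.val hcon
              omega
      obtain ⟨l, hl, hsum⟩ := AddSubmonoid.exists_list_of_mem_closure hmem
      rw [← hsum]
      refine List.dvd_sum (fun x hx => h x ?_)
      exact Finset.mem_coe.mp (hl x hx)
end
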